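/- Lagrange's theorem on continued fractions: an irrational real number x has an eventually periodic regular continued fraction expansion (i.e. there exist N ≥ 1 and k ≥ 1 with aₙ₊ₖ = aₙ for all n ≥ N) if and only if x is a quadratic irrational, i.e. x satisfies a polynomial equation A x² + B x + C = 0 with integer coefficients and A ≠ 0. -/

import Mathlib

/-- The Gauss map `T : [0,1) → [0,1)`, `T 0 = 0` and `T x = 1/x - ⌊1/x⌋` for `x ≠ 0`. -/
noncomputable def gaussMap : ℝ → ℝ := fun x => if x = 0 then 0 else Int.fract (1 / x)

/-- The partial quotients of the regular continued fraction expansion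
`x = [a₀; a₁, a₂, …]`: `a₀ = ⌊x⌋` and `aₙ₊₁ = ⌊1 / Tⁿ({x})⌋` where `T` is the Gauss map. -/
noncomputable def cfA (x : ℝ) : ℕ → ℤ
  | 0 => ⌊x⌋
  | n + 1 => ⌊1 / gaussMap^[n] (Int.fract x)⌋


noncomputable def cfY (x : ℝ) (n : ℕ) : ℝ := gaussMap^[n] (Int.fract x)

noncomputable def cfZ (x : ℝ) (n : ℕ) : ℝ := (cfA x n : ℝ) + cfY x n

noncomputable def cfP (x : ℝ) : ℕ → ℤ
  | 0 => 0
  | 1 => 1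
  | n + 2 => cfA x n * cfP x (n + 1) + cfP x n

noncomputable def cfQ (x : ℝ) : ℕ → ℤ
  | 0 => 1
  | 1 => 0
  | n + 2 => cfA x n * cfQ x (n + 1) + cfQ x n

lemma cfA_succ (x : ℝ) (n : ℕ) : cfA x (n+1) = ⌊1 / cfY x n⌋ := rfl

lemma cfY_zero (x : ℝ) : cfY x 0 = Int.fract x := rfl

lemma cfY_succ' (x : ℝ) (n : ℕ) : cfY x (n+1) = gaussMap (cfY x n) := by
  simp [cfY, Function.iterate_succ_apply']

-- basic: irrational and in (0,1)
lemma cfY_basic (x : ℝ) (hx : Irrational x) (n : ℕ) :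
    Irrational (cfY x n) ∧ 0 < cfY x n ∧ cfY x n < 1 := by
  induction n with
  | zero =>
    have hi : Irrational (Int.fract x) := by
      rw [Int.fract]; exact hx.sub_intCast ⌊x⌋
    refine ⟨hi, lt_of_le_of_ne (Int.fract_nonneg x) (Ne.symm hi.ne_zero), Int.fract_lt_one x⟩
  | succ n ih =>
    obtain ⟨hi, h0, h1⟩ := ih
    rw [cfY_succ']
    have hne : cfY x n ≠ 0 := ne_of_gt h0
    have hinv : Irrational (1 / cfY x n) := by
      rw [one_div]; exact hi.inv
    have hgi : Irrational (gaussMap (cfY x n)) := by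
      rw [gaussMap]; simp only [hne, if_false]
      rw [Int.fract]; exact hinv.sub_intCast _
    refine ⟨hgi, ?_, ?_⟩
    · refine lt_of_le_of_ne ?_ (Ne.symm hgi.ne_zero)
      rw [gaussMap]; simp only [hne, if_false]; exact Int.fract_nonneg _
    · rw [gaussMap]; simp only [hne, if_false]; exact Int.fract_lt_one _

lemma cfY_recip (x : ℝ) (hx : Irrational x) (n : ℕ) :
    1 / cfY x n = (cfA x (n+1) : ℝ) + cfY x (n+1) := by
  have hne : cfY x n ≠ 0 := ne_of_gt (cfY_basic x hx n).2.1
  rw [cfA_succ, cfY_succ', gaussMap]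
  simp only [hne, if_false, Int.fract]
  ring

lemma cfA_one_le (x : ℝ) (hx : Irrational x) (n : ℕ) : 1 ≤ cfA x (n+1) := by
  have h := (cfY_basic x hx n)
  rw [cfA_succ]
  rw [Int.le_floor]
  push_cast
  rw [le_div_iff₀ h.2.1]
  linarith [h.2.2]

lemma cfZ_eq_recip (x : ℝ) (hx : Irrational x) (n : ℕ) :
    cfZ x (n+1) = 1 / cfY x n := (cfY_recip x hx n).symm

lemma cfZ_gt_one (x : ℝ) (hx : Irrational x) (n : ℕ) : 1 < cfZ x (n+1) := by
  have h := cfY_basic x hx (n+1)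
  have ha := cfA_one_le x hx n
  have : (1:ℝ) ≤ (cfA x (n+1) : ℝ) := by exact_mod_cast ha
  rw [cfZ]; linarith [h.2.1]

lemma cfZ_irrational (x : ℝ) (hx : Irrational x) (n : ℕ) : Irrational (cfZ x n) := by
  exact ((cfY_basic x hx n).1).intCast_add _

lemma cfY_pos (x : ℝ) (hx : Irrational x) (n : ℕ) : 0 < cfY x n := (cfY_basic x hx n).2.1

lemma cfZ_rec (x : ℝ) (hx : Irrational x) (n : ℕ) :
    cfZ x n * cfZ x (n+1) = (cfA x n : ℝ) * cfZ x (n+1) + 1 := by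
  have h1 : cfZ x (n+1) = 1 / cfY x n := cfZ_eq_recip x hx n
  have hne : cfY x n ≠ 0 := ne_of_gt (cfY_pos x hx n)
  rw [cfZ, h1]
  field_simp

lemma cfZ_zero (x : ℝ) : cfZ x 0 = x := by
  have h0 : cfA x 0 = ⌊x⌋ := rfl
  rw [cfZ, cfY_zero, h0, Int.fract]
  ring

lemma cf_ident (x : ℝ) (hx : Irrational x) (n : ℕ) :
    x * ((cfQ x (n+1) : ℝ) * cfZ x n + (cfQ x n : ℝ))
      = (cfP x (n+1) : ℝ) * cfZ x n + (cfP x n : ℝ) := by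
  induction n with
  | zero => simp [cfP, cfQ, cfZ_zero]
  | succ n ih =>
    have hrec := cfZ_rec x hx n
    have hP : (cfP x (n+2) : ℝ) = (cfA x n : ℝ) * (cfP x (n+1) : ℝ) + (cfP x n : ℝ) := by
      rw [show cfP x (n+2) = cfA x n * cfP x (n+1) + cfP x n from rfl]; push_cast; ring
    have hQ : (cfQ x (n+2) : ℝ) = (cfA x n : ℝ) * (cfQ x (n+1) : ℝ) + (cfQ x n : ℝ) := by
      rw [show cfQ x (n+2) = cfA x n * cfQ x (n+1) + cfQ x n from rfl]; push_cast; ring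
    rw [hP, hQ]
    linear_combination (cfZ x (n+1)) * ih + ((cfP x (n+1):ℝ) - x * (cfQ x (n+1):ℝ)) * hrec

lemma cf_det (x : ℝ) (n : ℕ) :
    cfP x (n+1) * cfQ x n - cfP x n * cfQ x (n+1) = (-1)^n := by
  induction n with
  | zero => simp [cfP, cfQ]
  | succ n ih =>
    have hP : cfP x (n+2) = cfA x n * cfP x (n+1) + cfP x n := rfl
    have hQ : cfQ x (n+2) = cfA x n * cfQ x (n+1) + cfQ x n := rfl
    rw [hP, hQ, pow_succ]
    linear_combination (-1 : ℤ) * ih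
lemma cfQ_nonneg (x : ℝ) (hx : Irrational x) : ∀ n, 0 ≤ cfQ x n ∧ 1 ≤ cfQ x (n+2) := by
  intro n
  induction n using Nat.strong_induction_on with
  | _ n ih =>
    match n with
    | 0 => exact ⟨by norm_num [cfQ], by norm_num [cfQ]⟩
    | 1 =>
      refine ⟨by norm_num [cfQ], ?_⟩
      have : cfQ x 3 = cfA x 1 * cfQ x 2 + cfQ x 1 := rfl
      rw [this]
      have h1 := cfA_one_le x hx 0
      have h2 : cfQ x 2 = 1 := by norm_num [cfQ]
      have h3 : cfQ x 1 = 0 := rfl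
      rw [h2, h3]; nlinarith
    | (m+2) =>
      have hm := ih m (by omega)
      have hm1 := ih (m+1) (by omega)
      have hrec : cfQ x (m+4) = cfA x (m+2) * cfQ x (m+3) + cfQ x (m+2) := rfl
      have ha := cfA_one_le x hx (m+1)
      refine ⟨by linarith [hm.2], ?_⟩
      rw [hrec]
      nlinarith [hm1.2, hm.2]

lemma cfQ_pos (x : ℝ) (hx : Irrational x) (n : ℕ) : 1 ≤ cfQ x (n+2) := (cfQ_nonneg x hx n).2

lemma cfQ_growth (x : ℝ) (hx : Irrational x) : ∀ n : ℕ, (n : ℤ) ≤ cfQ x (n + 2 : ℕ) := by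
  intro n
  induction n using Nat.strong_induction_on with
  | _ n ih =>
    match n with
    | 0 => simpa using (cfQ_nonneg x hx 0).1.trans (by norm_num [cfQ])
    | 1 => exact_mod_cast cfQ_pos x hx 1
    | (m+2) =>
      have h1 := ih (m+1) (by omega)
      have h2 := cfQ_pos x hx m
      have ha := cfA_one_le x hx (m+1)
      have hrec : cfQ x (m+4) = cfA x (m+2) * cfQ x (m+3) + cfQ x (m+2) := rfl
      have hq3 : (1:ℤ) ≤ cfQ x (m+3) := cfQ_pos x hx (m+1)
      rw [hrec]
      have hm : (1:ℤ) * cfQ x (m+3) ≤ cfA x (m+2) * cfQ x (m+3) :=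
        mul_le_mul_of_nonneg_right ha (by linarith)
      push_cast
      push_cast at h1
      linarith

lemma cf_ident2 (x : ℝ) (hx : Irrational x) (n : ℕ) :
    (x * (cfQ x (n+1) : ℝ) - (cfP x (n+1) : ℝ)) * ((cfQ x (n+1) : ℝ) * cfZ x n + (cfQ x n : ℝ))
      = (-1)^(n+1) := by
  have hid := cf_ident x hx n
  have hdet := cf_det x n
  have hdet' : (cfP x (n+1) : ℝ) * (cfQ x n : ℝ) - (cfP x n : ℝ) * (cfQ x (n+1) : ℝ) = (-1)^n := by
    exact_mod_cast congrArg (Int.cast : ℤ → ℝ) hdet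
  rw [pow_succ]
  linear_combination (cfQ x (n+1) : ℝ) * hid - hdet'

-- denominator bound: for n ≥ 1
lemma cf_den_ge (x : ℝ) (hx : Irrational x) (n : ℕ) :
    (cfQ x (n+2) : ℝ) ≤ (cfQ x (n+2) : ℝ) * cfZ x (n+1) + (cfQ x (n+1) : ℝ) := by
  have hz := cfZ_gt_one x hx n
  have hq : (1:ℝ) ≤ (cfQ x (n+2) : ℝ) := by exact_mod_cast cfQ_pos x hx n
  have hq' : (0:ℝ) ≤ (cfQ x (n+1) : ℝ) := by exact_mod_cast (cfQ_nonneg x hx (n+1)).1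
  nlinarith

lemma cf_approx (x : ℝ) (hx : Irrational x) (n : ℕ) :
    |x * (cfQ x (n+2) : ℝ) - (cfP x (n+2) : ℝ)| * (cfQ x (n+2) : ℝ) ≤ 1 := by
  have h2 := cf_ident2 x hx (n+1)
  have hden := cf_den_ge x hx n
  have hq : (1:ℝ) ≤ (cfQ x (n+2) : ℝ) := by exact_mod_cast cfQ_pos x hx n
  have habs : |x * (cfQ x (n+2) : ℝ) - (cfP x (n+2) : ℝ)|
      * |(cfQ x (n+2) : ℝ) * cfZ x (n+1) + (cfQ x (n+1) : ℝ)| = 1 := by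
    rw [← abs_mul, h2, abs_pow, abs_neg, abs_one, one_pow]
  have hdenpos : (0:ℝ) < (cfQ x (n+2) : ℝ) * cfZ x (n+1) + (cfQ x (n+1) : ℝ) := by linarith
  rw [abs_of_pos hdenpos] at habs
  nlinarith [abs_nonneg (x * (cfQ x (n+2) : ℝ) - (cfP x (n+2) : ℝ))]

lemma cf_approx' (x : ℝ) (hx : Irrational x) (n : ℕ) :
    |x * (cfQ x (n+2) : ℝ) - (cfP x (n+2) : ℝ)| ≤ 1 := by
  have h := cf_approx x hx n
  have hq : (1:ℝ) ≤ (cfQ x (n+2) : ℝ) := by exact_mod_cast cfQ_pos x hx n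
  nlinarith [abs_nonneg (x * (cfQ x (n+2) : ℝ) - (cfP x (n+2) : ℝ))]
def Quad (t : ℝ) : Prop := ∃ A B C : ℤ, A ≠ 0 ∧ (A:ℝ) * t^2 + (B:ℝ) * t + (C:ℝ) = 0

lemma irr_lin {t : ℝ} (ht : Irrational t) {a b : ℤ} (h : (a:ℝ) * t + (b:ℝ) = 0) : a = 0 := by
  by_contra ha
  apply ht
  refine ⟨(-b : ℚ) / (a : ℚ), ?_⟩
  have ha' : ((a:ℚ):ℝ) ≠ 0 := by exact_mod_cast (Int.cast_ne_zero (α := ℝ)).2 ha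
  push_cast
  have haR : (a:ℝ) ≠ 0 := by exact_mod_cast ha
  field_simp
  linarith

lemma quad_int_add {t : ℝ} (m : ℤ) (h : Quad t) : Quad ((m:ℝ) + t) := by
  obtain ⟨A, B, C, hA, heq⟩ := h
  refine ⟨A, B - 2*A*m, A*m^2 - B*m + C, hA, ?_⟩
  push_cast
  linear_combination heq

lemma quad_inv {t : ℝ} (ht : Irrational t) (h : Quad t) : Quad (1/t) := by
  obtain ⟨A, B, C, hA, heq⟩ := h
  have htne : t ≠ 0 := ht.ne_zero
  have hC : C ≠ 0 := by
    intro hC0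
    subst hC0
    have hfac : t * ((A:ℝ) * t + (B:ℝ)) = 0 := by push_cast at heq ⊢; linear_combination heq
    have h2 : (A:ℝ) * t + (B:ℝ) = 0 := by
      rcases mul_eq_zero.1 hfac with h | h
      · exact absurd h htne
      · exact h
    exact hA (irr_lin ht h2)
  refine ⟨C, B, A, hC, ?_⟩
  have hkey : (C:ℝ) * (1/t)^2 + (B:ℝ) * (1/t) + (A:ℝ)
      = ((A:ℝ) * t^2 + (B:ℝ) * t + (C:ℝ)) / t^2 := by
    field_simp
    ring
  rw [hkey, heq, zero_div]

lemma quad_y_step (x : ℝ) (hx : Irrational x) (n : ℕ)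
    (h : Quad (cfY x (n+1))) : Quad (cfY x n) := by
  have h1 : Quad (cfZ x (n+1)) := quad_int_add (cfA x (n+1)) h
  have h2 : Quad (1 / cfZ x (n+1)) := quad_inv (cfZ_irrational x hx (n+1)) h1
  have h3 : cfY x n = 1 / cfZ x (n+1) := by
    rw [cfZ_eq_recip x hx n, one_div_one_div]
  rwa [h3]

lemma quad_of_quad_y (x : ℝ) (hx : Irrational x) (n : ℕ) (h : Quad (cfY x n)) : Quad x := by
  induction n with
  | zero =>
    have h0 : Quad ((⌊x⌋ : ℝ) + Int.fract x) := quad_int_add ⌊x⌋ h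
    rwa [Int.floor_add_fract] at h0
  | succ n ih => exact ih (quad_y_step x hx n h)

-- digits of the tail
lemma cfY_shift (x : ℝ) (hx : Irrational x) (m t : ℕ) :
    cfY (cfY x m) t = cfY x (m + t) := by
  have hb := cfY_basic x hx m
  have hfr : Int.fract (cfY x m) = cfY x m :=
    Int.fract_eq_self.2 ⟨le_of_lt hb.2.1, hb.2.2⟩
  rw [cfY, hfr, cfY, cfY, ← Function.iterate_add_apply]
  congr 1
  omega

lemma cfA_shift (x : ℝ) (hx : Irrational x) (m t : ℕ) :
    cfA (cfY x m) (t+1) = cfA x (m + t + 1) := by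
  rw [cfA_succ, cfY_shift x hx m t, cfA_succ]

lemma cfPQ_congr {u v : ℝ} (h : ∀ n, cfA u n = cfA v n) :
    ∀ n, cfP u n = cfP v n ∧ cfQ u n = cfQ v n := by
  intro n
  induction n using Nat.strong_induction_on with
  | _ n ih =>
    match n with
    | 0 => exact ⟨rfl, rfl⟩
    | 1 => exact ⟨rfl, rfl⟩
    | (m+2) =>
      have h1 := ih m (by omega)
      have h2 := ih (m+1) (by omega)
      constructor
      · show cfA u m * cfP u (m+1) + cfP u m = cfA v m * cfP v (m+1) + cfP v m
        rw [h m, h1.1, h2.1]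
      · show cfA u m * cfQ u (m+1) + cfQ u m = cfA v m * cfQ v (m+1) + cfQ v m
        rw [h m, h1.2, h2.2]

lemma cf_unique {u v : ℝ} (hu : Irrational u) (hv : Irrational v)
    (h : ∀ n, cfA u n = cfA v n) : u = v := by
  by_contra hne
  have hd : 0 < |u - v| := abs_pos.2 (sub_ne_zero.2 hne)
  obtain ⟨m, hm⟩ := exists_nat_gt (2 / |u - v|)
  -- use index n := m + 1 ≥ 1 so that Q (n+2) ≥ n ≥ m+1... take n = m+1
  set n : ℕ := m + 1 with hn
  have hQg := cfQ_growth u hu n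
  have hQR : ((n:ℝ)) ≤ (cfQ u (n+2) : ℝ) := by exact_mod_cast hQg
  have hQpos : (0:ℝ) < (cfQ u (n+2) : ℝ) := by
    have : (1:ℤ) ≤ cfQ u (n+2) := cfQ_pos u hu n
    exact_mod_cast lt_of_lt_of_le zero_lt_one (by exact_mod_cast this)
  have hau := cf_approx' u hu n
  have hav := cf_approx' v hv n
  have hPQ := cfPQ_congr h (n+2)
  rw [← hPQ.1, ← hPQ.2] at hav
  -- |u - v| * Q ≤ 2
  have key : |u - v| * (cfQ u (n+2) : ℝ) ≤ 2 := by
    have h1 : |u - v| * (cfQ u (n+2) : ℝ) = |(u - v) * (cfQ u (n+2) : ℝ)| := by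
      rw [abs_mul, abs_of_pos hQpos]
    have h2 : (u - v) * (cfQ u (n+2) : ℝ) = (u * (cfQ u (n+2):ℝ) - (cfP u (n+2):ℝ))
        - (v * (cfQ u (n+2):ℝ) - (cfP u (n+2):ℝ)) := by ring
    rw [h1, h2]
    calc _ ≤ |u * (cfQ u (n+2):ℝ) - (cfP u (n+2):ℝ)|
            + |v * (cfQ u (n+2):ℝ) - (cfP u (n+2):ℝ)| := abs_sub _ _
      _ ≤ 2 := by linarith
  have hmn : (2 / |u - v|) < (cfQ u (n+2) : ℝ) := by
    have : (m:ℝ) < (n:ℝ) := by exact_mod_cast Nat.lt_succ_self m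
    linarith
  have : 2 < |u - v| * (cfQ u (n+2) : ℝ) := by
    rw [div_lt_iff₀ hd] at hmn
    linarith [mul_comm |u - v| (cfQ u (n+2) : ℝ)]
  linarith
lemma periodic_imp_quad (x : ℝ) (hx : Irrational x) (N k : ℕ) (hN : 1 ≤ N) (hk : 1 ≤ k)
    (hper : ∀ n : ℕ, N ≤ n → cfA x (n + k) = cfA x n) : Quad x := by
  obtain ⟨m, rfl⟩ : ∃ m, N = m + 1 := ⟨N - 1, by omega⟩
  set u : ℝ := cfY x m with hu_def
  set v : ℝ := cfY x (m + k) with hv_def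
  have hu : Irrational u := (cfY_basic x hx m).1
  have hv : Irrational v := (cfY_basic x hx (m+k)).1
  have hdig : ∀ n, cfA u n = cfA v n := by
    intro n
    match n with
    | 0 =>
      have h1 : cfA u 0 = ⌊u⌋ := rfl
      have h2 : cfA v 0 = ⌊v⌋ := rfl
      rw [h1, h2]
      have hub := (cfY_basic x hx m).2
      have hvb := (cfY_basic x hx (m+k)).2
      rw [Int.floor_eq_zero_iff.2 ⟨le_of_lt hub.1, hub.2⟩,
        Int.floor_eq_zero_iff.2 ⟨le_of_lt hvb.1, hvb.2⟩]
    | (t+1) =>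
      rw [cfA_shift x hx m t, cfA_shift x hx (m+k) t]
      have : m + k + t + 1 = (m + t + 1) + k := by omega
      rw [this, hper (m + t + 1) (by omega)]
  have huv : u = v := cf_unique hu hv hdig
  -- complete quotient of u at index k equals cfA u k + u
  have hyk : cfY u k = v := by
    rw [hu_def, hv_def]
    exact cfY_shift x hx m k
  have hz : cfZ u k = (cfA u k : ℝ) + u := by
    rw [cfZ, hyk, ← huv]
  have hid := cf_ident u hu k
  rw [hz] at hid
  have hQ1 : 1 ≤ cfQ u (k+1) := by
    obtain ⟨j, rfl⟩ : ∃ j, k = j + 1 := ⟨k - 1, by omega⟩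
    exact cfQ_pos u hu j
  have hQuad_u : Quad u := by
    refine ⟨cfQ u (k+1), cfA u k * cfQ u (k+1) + cfQ u k - cfP u (k+1),
      -(cfA u k * cfP u (k+1) + cfP u k), by omega, ?_⟩
    push_cast
    linear_combination hid
  exact quad_of_quad_y x hx m hQuad_u
noncomputable def cfAA (x : ℝ) (A B C : ℤ) (n : ℕ) : ℤ :=
  A * (cfP x (n+1))^2 + B * (cfP x (n+1)) * (cfQ x (n+1)) + C * (cfQ x (n+1))^2

noncomputable def cfBB (x : ℝ) (A B C : ℤ) (n : ℕ) : ℤ :=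
  2*A*(cfP x (n+2))*(cfP x (n+1)) + B*((cfP x (n+2))*(cfQ x (n+1)) + (cfP x (n+1))*(cfQ x (n+2)))
    + 2*C*(cfQ x (n+2))*(cfQ x (n+1))

lemma cf_quadZ (x : ℝ) (hx : Irrational x) (A B C : ℤ)
    (heq : (A:ℝ) * x^2 + (B:ℝ) * x + (C:ℝ) = 0) (n : ℕ) :
    (cfAA x A B C (n+1) : ℝ) * (cfZ x (n+1))^2 + (cfBB x A B C n : ℝ) * cfZ x (n+1)
      + (cfAA x A B C n : ℝ) = 0 := by
  have hid := cf_ident x hx (n+1)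
  unfold cfAA cfBB
  push_cast
  linear_combination (((cfQ x (n+2):ℝ) * cfZ x (n+1) + (cfQ x (n+1):ℝ))^2) * heq
    + (-((A:ℝ)*(((cfP x (n+2):ℝ) * cfZ x (n+1) + (cfP x (n+1):ℝ))
        + x*((cfQ x (n+2):ℝ) * cfZ x (n+1) + (cfQ x (n+1):ℝ)))
      + (B:ℝ)*((cfQ x (n+2):ℝ) * cfZ x (n+1) + (cfQ x (n+1):ℝ)))) * hid

lemma cfAA_factor (x : ℝ) (A B C : ℤ)
    (heq : (A:ℝ) * x^2 + (B:ℝ) * x + (C:ℝ) = 0) (n : ℕ) :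
    (cfAA x A B C (n+1) : ℝ)
      = ((cfP x (n+2):ℝ) - x * (cfQ x (n+2):ℝ))
        * ((A:ℝ) * ((cfP x (n+2):ℝ) + x * (cfQ x (n+2):ℝ)) + (B:ℝ) * (cfQ x (n+2):ℝ)) := by
  unfold cfAA
  push_cast
  linear_combination ((cfQ x (n+2):ℝ)^2) * heq

lemma cfAA_ne (x : ℝ) (hx : Irrational x) (A B C : ℤ) (hA : A ≠ 0)
    (heq : (A:ℝ) * x^2 + (B:ℝ) * x + (C:ℝ) = 0) (n : ℕ) :
    cfAA x A B C (n+1) ≠ 0 := by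
  intro h0
  have hfac := cfAA_factor x A B C heq n
  rw [h0] at hfac
  rw [Int.cast_zero] at hfac
  have hQ : (1:ℤ) ≤ cfQ x (n+2) := cfQ_pos x hx n
  rcases mul_eq_zero.1 hfac.symm with h | h
  · have : (cfQ x (n+2) : ℝ) * x + (-(cfP x (n+2)) : ℤ) = 0 := by push_cast; linarith
    have := irr_lin hx this
    omega
  · have : ((A * cfQ x (n+2) : ℤ) : ℝ) * x + ((A * cfP x (n+2) + B * cfQ x (n+2) : ℤ) : ℝ) = 0 := by
      push_cast; linarith
    have h2 := irr_lin hx this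
    have : A * cfQ x (n+2) ≠ 0 := mul_ne_zero hA (by omega)
    exact this h2

lemma cfAA_identity (x : ℝ) (A B C : ℤ)
    (heq : (A:ℝ) * x^2 + (B:ℝ) * x + (C:ℝ) = 0) (n : ℕ) :
    (cfAA x A B C (n+1) : ℝ)
      = (A:ℝ) * (x * (cfQ x (n+2):ℝ) - (cfP x (n+2):ℝ))^2
        - (2*(A:ℝ)*x + (B:ℝ)) * (cfQ x (n+2):ℝ) * (x * (cfQ x (n+2):ℝ) - (cfP x (n+2):ℝ)) := by
  unfold cfAA
  push_cast
  linear_combination ((cfQ x (n+2):ℝ)^2) * heq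

lemma cfAA_bound (x : ℝ) (hx : Irrational x) (A B C : ℤ)
    (heq : (A:ℝ) * x^2 + (B:ℝ) * x + (C:ℝ) = 0) (n : ℕ) :
    |(cfAA x A B C (n+1) : ℝ)| ≤ |(A:ℝ)| + |2*(A:ℝ)*x + (B:ℝ)| := by
  have hident := cfAA_identity x A B C heq n
  set e : ℝ := x * (cfQ x (n+2):ℝ) - (cfP x (n+2):ℝ) with he
  have h1 : |e| ≤ 1 := cf_approx' x hx n
  have h2 : |e| * (cfQ x (n+2):ℝ) ≤ 1 := cf_approx x hx n
  have hQ0 : (0:ℝ) < (cfQ x (n+2):ℝ) := by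
    exact_mod_cast lt_of_lt_of_le zero_lt_one (by exact_mod_cast cfQ_pos x hx n)
  rw [hident]
  have htri : |(A:ℝ) * e^2 - (2*(A:ℝ)*x + (B:ℝ)) * (cfQ x (n+2):ℝ) * e|
      ≤ |(A:ℝ) * e^2| + |(2*(A:ℝ)*x + (B:ℝ)) * (cfQ x (n+2):ℝ) * e| := abs_sub _ _
  have hh1 : |(A:ℝ) * e^2| ≤ |(A:ℝ)| := by
    rw [abs_mul, abs_pow]
    have he2 : |e|^2 ≤ 1 := by nlinarith [abs_nonneg e]
    calc |(A:ℝ)| * |e|^2 ≤ |(A:ℝ)| * 1 := mul_le_mul_of_nonneg_left he2 (abs_nonneg _)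
      _ = |(A:ℝ)| := mul_one _
  have hh2 : |(2*(A:ℝ)*x + (B:ℝ)) * (cfQ x (n+2):ℝ) * e| ≤ |2*(A:ℝ)*x + (B:ℝ)| := by
    rw [abs_mul, abs_mul, abs_of_pos hQ0, mul_assoc]
    have hqe : (cfQ x (n+2):ℝ) * |e| ≤ 1 := by
      rw [mul_comm]; exact h2
    calc |2*(A:ℝ)*x + (B:ℝ)| * ((cfQ x (n+2):ℝ) * |e|) ≤ |2*(A:ℝ)*x + (B:ℝ)| * 1 :=
        mul_le_mul_of_nonneg_left hqe (abs_nonneg _)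
      _ = |2*(A:ℝ)*x + (B:ℝ)| := mul_one _
  linarith

lemma cfBB_sq (x : ℝ) (A B C : ℤ) (n : ℕ) :
    (cfBB x A B C n)^2
      = (B^2 - 4*A*C) * (cfP x (n+2) * cfQ x (n+1) - cfP x (n+1) * cfQ x (n+2))^2
        + 4 * (cfAA x A B C (n+1)) * (cfAA x A B C n) := by
  unfold cfAA cfBB
  ring

lemma cfBB_sq' (x : ℝ) (A B C : ℤ) (n : ℕ) :
    (cfBB x A B C n)^2 = (B^2 - 4*A*C) + 4 * (cfAA x A B C (n+1)) * (cfAA x A B C n) := by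
  rw [cfBB_sq, cf_det x (n+1)]
  have h1 : (((-1:ℤ))^(n+1))^2 = 1 := by
    rw [← pow_mul, mul_comm, pow_mul]
    norm_num
  rw [h1, mul_one]
lemma cfY_fract_cfZ (x : ℝ) (hx : Irrational x) (m : ℕ) : Int.fract (cfZ x m) = cfY x m := by
  rw [cfZ, Int.fract_intCast_add]
  exact Int.fract_eq_self.2 ⟨le_of_lt (cfY_basic x hx m).2.1, (cfY_basic x hx m).2.2⟩

lemma cfA_of_cfY_eq (x : ℝ) (i j t : ℕ) (h : cfY x i = cfY x j) :
    cfA x (i+t+1) = cfA x (j+t+1) := by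
  rw [cfA_succ, cfA_succ]
  have h1 : cfY x (i+t) = gaussMap^[t] (cfY x i) := by
    rw [cfY, cfY, ← Function.iterate_add_apply]
    congr 1
    omega
  have h2 : cfY x (j+t) = gaussMap^[t] (cfY x j) := by
    rw [cfY, cfY, ← Function.iterate_add_apply]
    congr 1
    omega
  rw [h1, h2, h]

lemma quad_imp_periodic (x : ℝ) (hx : Irrational x) (A B C : ℤ) (hA : A ≠ 0)
    (heq : (A:ℝ) * x^2 + (B:ℝ) * x + (C:ℝ) = 0) :
    ∃ N : ℕ, 1 ≤ N ∧ ∃ k : ℕ, 1 ≤ k ∧ ∀ n : ℕ, N ≤ n → cfA x (n + k) = cfA x n := by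
  classical
  set K : ℤ := |A| + ⌈|2*(A:ℝ)*x + (B:ℝ)|⌉ with hK_def
  have hK : ∀ n, |cfAA x A B C (n+1)| ≤ K := by
    intro n
    have h1 := cfAA_bound x hx A B C heq n
    have h2 : |2*(A:ℝ)*x + (B:ℝ)| ≤ (⌈|2*(A:ℝ)*x + (B:ℝ)|⌉ : ℝ) := Int.le_ceil _
    have hreal : |((cfAA x A B C (n+1) : ℤ) : ℝ)| ≤ ((K : ℤ) : ℝ) := by
      rw [hK_def]
      push_cast
      linarith
    rw [← Int.cast_abs] at hreal
    exact_mod_cast hreal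
  have hK0 : (0:ℤ) ≤ K := (abs_nonneg _).trans (hK 0)
  set L : ℤ := max K (|B^2 - 4*A*C| + 4*K^2) with hL_def
  have hL : ∀ n, |cfAA x A B C (n+1)| ≤ L := fun n => (hK n).trans (le_max_left _ _)
  have hBB : ∀ n, |cfBB x A B C (n+1)| ≤ L := by
    intro n
    set b : ℤ := cfBB x A B C (n+1) with hb
    have hsq : b^2 = (B^2 - 4*A*C)
        + 4 * cfAA x A B C (n+2) * cfAA x A B C (n+1) := cfBB_sq' x A B C (n+1)
    have h1 : |cfAA x A B C (n+2)| ≤ K := hK (n+1)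
    have h2 : |cfAA x A B C (n+1)| ≤ K := hK n
    have hmul : |cfAA x A B C (n+2)| * |cfAA x A B C (n+1)| ≤ K * K :=
      mul_le_mul h1 h2 (abs_nonneg _) hK0
    have hprod : 4 * cfAA x A B C (n+2) * cfAA x A B C (n+1) ≤ 4*K^2 := by
      have hle : cfAA x A B C (n+2) * cfAA x A B C (n+1) ≤ K^2 := by
        calc cfAA x A B C (n+2) * cfAA x A B C (n+1)
            ≤ |cfAA x A B C (n+2) * cfAA x A B C (n+1)| := le_abs_self _
          _ = |cfAA x A B C (n+2)| * |cfAA x A B C (n+1)| := abs_mul _ _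
          _ ≤ K * K := hmul
          _ = K^2 := (sq K).symm
      linarith [hle]
    have hbsq : b^2 ≤ |B^2 - 4*A*C| + 4*K^2 := by
      have hd := le_abs_self (B^2 - 4*A*C)
      linarith [hsq, hprod, hd]
    have habsb : |b| ≤ b^2 := by
      rcases le_or_gt 1 |b| with h | h
      · nlinarith [sq_abs b]
      · have hb0 : |b| = 0 := by have := abs_nonneg b; omega
        nlinarith [sq_nonneg b]
    calc |b| ≤ b^2 := habsb
      _ ≤ |B^2 - 4*A*C| + 4*K^2 := hbsq
      _ ≤ L := le_max_right _ _
  -- pigeonhole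
  set T : Finset (ℤ×ℤ×ℤ) := Finset.Icc (-L,-L,-L) (L,L,L) with hT
  have gmem : ∀ n : ℕ,
      (cfAA x A B C (n+2), cfBB x A B C (n+1), cfAA x A B C (n+1)) ∈ T := by
    intro n
    have h1 := abs_le.1 (hL (n+1))
    have h2 := abs_le.1 (hBB n)
    have h3 := abs_le.1 (hL n)
    rw [hT, Finset.mem_Icc]
    constructor
    · exact Prod.mk_le_mk.2 ⟨h1.1, Prod.mk_le_mk.2 ⟨h2.1, h3.1⟩⟩
    · exact Prod.mk_le_mk.2 ⟨h1.2, Prod.mk_le_mk.2 ⟨h2.2, h3.2⟩⟩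
  set g : ℕ → {p // p ∈ T} := fun n =>
    ⟨(cfAA x A B C (n+2), cfBB x A B C (n+1), cfAA x A B C (n+1)), gmem n⟩ with hg
  obtain ⟨y, hy⟩ := Finite.exists_infinite_fiber g
  have hs : (g ⁻¹' {y}).Infinite := Set.infinite_coe_iff.1 hy
  obtain ⟨n₁, hn₁⟩ := hs.nonempty
  obtain ⟨n₂, hn₂, h12⟩ := hs.exists_gt n₁
  obtain ⟨n₃, hn₃, h23⟩ := hs.exists_gt n₂
  have e12 : g n₁ = g n₂ := by
    rw [Set.mem_preimage, Set.mem_singleton_iff] at hn₁ hn₂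
    rw [hn₁, hn₂]
  have e23 : g n₂ = g n₃ := by
    rw [Set.mem_preimage, Set.mem_singleton_iff] at hn₂ hn₃
    rw [hn₂, hn₃]
  have v12 : (cfAA x A B C (n₁+2), cfBB x A B C (n₁+1), cfAA x A B C (n₁+1))
      = (cfAA x A B C (n₂+2), cfBB x A B C (n₂+1), cfAA x A B C (n₂+1)) :=
    congrArg Subtype.val e12
  have v23 : (cfAA x A B C (n₂+2), cfBB x A B C (n₂+1), cfAA x A B C (n₂+1))
      = (cfAA x A B C (n₃+2), cfBB x A B C (n₃+1), cfAA x A B C (n₃+1)) :=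
    congrArg Subtype.val e23
  simp only [Prod.mk.injEq] at v12 v23
  -- the three complete quotients are roots of the same quadratic
  have hq1 := cf_quadZ x hx A B C heq (n₁+1)
  have hq2 := cf_quadZ x hx A B C heq (n₂+1)
  have hq3 := cf_quadZ x hx A B C heq (n₃+1)
  rw [← v12.1, ← v12.2.1, ← v12.2.2] at hq2
  rw [← v23.1, ← v23.2.1, ← v23.2.2] at hq3
  rw [← v12.1, ← v12.2.1, ← v12.2.2] at hq3
  set a : ℤ := cfAA x A B C (n₁+2)
  set b : ℤ := cfBB x A B C (n₁+1)
  set c : ℤ := cfAA x A B C (n₁+1)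
  have ha0 : (a:ℝ) ≠ 0 := Int.cast_ne_zero.2 (cfAA_ne x hx A B C hA heq (n₁+1))
  have key : ∃ i j : ℕ, i < j ∧ cfZ x (i+2) = cfZ x (j+2) := by
    by_cases e1 : cfZ x (n₁+2) = cfZ x (n₂+2)
    · exact ⟨n₁, n₂, h12, e1⟩
    by_cases e2 : cfZ x (n₂+2) = cfZ x (n₃+2)
    · exact ⟨n₂, n₃, h23, e2⟩
    have l12 : (a:ℝ) * (cfZ x (n₁+2) + cfZ x (n₂+2)) + (b:ℝ) = 0 := by
      have hfac : (cfZ x (n₁+2) - cfZ x (n₂+2))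
          * ((a:ℝ) * (cfZ x (n₁+2) + cfZ x (n₂+2)) + (b:ℝ)) = 0 := by
        linear_combination hq1 - hq2
      rcases mul_eq_zero.1 hfac with h | h
      · exact absurd (sub_eq_zero.1 h) e1
      · exact h
    have l23 : (a:ℝ) * (cfZ x (n₂+2) + cfZ x (n₃+2)) + (b:ℝ) = 0 := by
      have hfac : (cfZ x (n₂+2) - cfZ x (n₃+2))
          * ((a:ℝ) * (cfZ x (n₂+2) + cfZ x (n₃+2)) + (b:ℝ)) = 0 := by
        linear_combination hq2 - hq3
      rcases mul_eq_zero.1 hfac with h | h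
      · exact absurd (sub_eq_zero.1 h) e2
      · exact h
    have l13 : (a:ℝ) * (cfZ x (n₁+2) - cfZ x (n₃+2)) = 0 := by
      linear_combination l12 - l23
    rcases mul_eq_zero.1 l13 with h | h
    · exact absurd h ha0
    · exact ⟨n₁, n₃, h12.trans h23, sub_eq_zero.1 h⟩
  obtain ⟨i, j, hij, hzeq⟩ := key
  have hy_eq : cfY x (i+2) = cfY x (j+2) := by
    rw [← cfY_fract_cfZ x hx (i+2), ← cfY_fract_cfZ x hx (j+2), hzeq]
  refine ⟨i+3, by omega, j-i, by omega, ?_⟩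
  intro n hn
  obtain ⟨t, rfl⟩ : ∃ t, n = (i+2)+t+1 := ⟨n - (i+3), by omega⟩
  rw [show (i+2)+t+1+(j-i) = (j+2)+t+1 from by omega]
  exact (cfA_of_cfY_eq x (i+2) (j+2) t hy_eq).symm

/-- Lagrange's theorem: an irrational real number has an eventually periodic regular
continued fraction expansion iff it is a quadratic irrational. -/
theorem lagrange_periodic_iff_quadratic (x : ℝ) (hx : Irrational x) :
    (∃ N : ℕ, 1 ≤ N ∧ ∃ k : ℕ, 1 ≤ k ∧ ∀ n : ℕ, N ≤ n → cfA x (n + k) = cfA x n) ↔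
      ∃ A B C : ℤ, A ≠ 0 ∧ (A : ℝ) * x ^ 2 + (B : ℝ) * x + (C : ℝ) = 0 := by
  constructor
  · rintro ⟨N, hN, k, hk, hper⟩
    exact periodic_imp_quad x hx N k hN hk hper
  · rintro ⟨A, B, C, hA, heq⟩
    exact quad_imp_periodic x hx A B C hA heq
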